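/- There exists a distributivity matrix of height 𝔥 (i.e., a witnessing family of 𝔥 many mad families with no common mad refinement can be chosen to be refining), and every distributivity matrix of height λ satisfies |λ| ≥ 𝔥; hence 𝔥 is the minimal height of a distributivity matrix. -/

import Mathlib

/-- `b ⊆* a`: `b \ a` is finite. -/
def AlmostSubset (b a : Set ℕ) : Prop := (b \ a).Finite

/-- A mad family on ℕ: a maximal almost disjoint family of infinite subsets of ℕ. -/
def IsMadFamily (A : Set (Set ℕ)) : Prop :=
  (∀ a ∈ A, a.Infinite) ∧
  (A.Pairwise fun a a' => (a ∩ a').Finite) ∧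
  (∀ b : Set ℕ, b.Infinite → ∃ a ∈ A, (b ∩ a).Infinite)

/-- `B` refines `A`: every element of `B` is almost included in some element of `A`. -/
def Refines (B A : Set (Set ℕ)) : Prop := ∀ b ∈ B, ∃ a ∈ A, AlmostSubset b a

/-- A distributivity matrix of height `lam`: a refining system of mad families
indexed by the ordinals below `lam`, without common (mad) refinement. -/
def IsDistribMatrix (lam : Ordinal) (A : Ordinal → Set (Set ℕ)) : Prop :=
  (∀ ξ < lam, IsMadFamily (A ξ)) ∧
  (∀ ξ η : Ordinal, ξ ≤ η → η < lam → Refines (A η) (A ξ)) ∧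
  ¬ ∃ B : Set (Set ℕ), IsMadFamily B ∧ ∀ ξ < lam, Refines B (A ξ)


/-- The distributivity number `𝔥`: the smallest cardinality of a family of mad
families on ℕ such that no single mad family refines all of them. -/
noncomputable def distributivityNumber : Cardinal :=
  sInf { κ : Cardinal | ∃ (ι : Type) (A : ι → Set (Set ℕ)),
    Cardinal.mk ι = κ ∧ (∀ i, IsMadFamily (A i)) ∧
    ¬ ∃ B : Set (Set ℕ), IsMadFamily B ∧ ∀ i, Refines B (A i) }

/-! ### Auxiliary lemmas -/

/-- The defining set of the distributivity number. -/
def distSet : Set Cardinal :=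
  { κ : Cardinal | ∃ (ι : Type) (A : ι → Set (Set ℕ)),
    Cardinal.mk ι = κ ∧ (∀ i, IsMadFamily (A i)) ∧
    ¬ ∃ B : Set (Set ℕ), IsMadFamily B ∧ ∀ i, Refines B (A i) }

lemma distributivityNumber_eq : distributivityNumber = sInf distSet := rfl

lemma almostSubset_refl (a : Set ℕ) : AlmostSubset a a := by
  simp [AlmostSubset]

lemma almostSubset_trans {a b c : Set ℕ} (h1 : AlmostSubset a b) (h2 : AlmostSubset b c) :
    AlmostSubset a c := by
  refine (h1.union h2).subset ?_
  intro x hx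
  simp only [Set.mem_diff, Set.mem_union] at *
  tauto

lemma refines_refl (A : Set (Set ℕ)) : Refines A A :=
  fun b hb => ⟨b, hb, almostSubset_refl b⟩

lemma refines_trans {C B A : Set (Set ℕ)} (h1 : Refines C B) (h2 : Refines B A) :
    Refines C A := by
  intro c hc
  obtain ⟨b, hb, hcb⟩ := h1 c hc
  obtain ⟨a, ha, hba⟩ := h2 b hb
  exact ⟨a, ha, almostSubset_trans hcb hba⟩

lemma isMadFamily_singleton_univ : IsMadFamily {Set.univ} := by
  refine ⟨?_, Set.pairwise_singleton _ _, ?_⟩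
  · intro a ha
    rw [Set.mem_singleton_iff] at ha
    subst ha
    exact Set.infinite_univ
  · intro b hb
    exact ⟨Set.univ, rfl, by simpa using hb⟩

/-- Two mad families have a common mad refinement (take pairwise intersections). -/
lemma exists_refine_pair {A B : Set (Set ℕ)} (hA : IsMadFamily A) (hB : IsMadFamily B) :
    ∃ C, IsMadFamily C ∧ Refines C A ∧ Refines C B := by
  refine ⟨{s | ∃ a ∈ A, ∃ b ∈ B, s = a ∩ b ∧ s.Infinite}, ⟨?_, ?_, ?_⟩, ?_, ?_⟩
  · rintro s ⟨a, ha, b, hb, rfl, hinf⟩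
    exact hinf
  · rintro s ⟨a, ha, b, hb, rfl, _⟩ s' ⟨a', ha', b', hb', rfl, _⟩ hne
    by_cases hab : a = a'
    · subst hab
      have hbb : b ≠ b' := fun h => hne (by rw [h])
      have : (a ∩ b) ∩ (a ∩ b') ⊆ b ∩ b' := by
        intro x hx; exact ⟨hx.1.2, hx.2.2⟩
      exact (hB.2.1 hb hb' hbb).subset this
    · have : (a ∩ b) ∩ (a' ∩ b') ⊆ a ∩ a' := by
        intro x hx; exact ⟨hx.1.1, hx.2.1⟩
      exact (hA.2.1 ha ha' hab).subset this
  · intro c hc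
    obtain ⟨a, ha, h1⟩ := hA.2.2 c hc
    obtain ⟨b, hb, h2⟩ := hB.2.2 _ h1
    have hsub : (c ∩ a) ∩ b ⊆ a ∩ b := by
      intro x hx; exact ⟨hx.1.2, hx.2⟩
    refine ⟨a ∩ b, ⟨a, ha, b, hb, rfl, h2.mono hsub⟩, ?_⟩
    have : c ∩ (a ∩ b) = (c ∩ a) ∩ b := by
      rw [Set.inter_assoc]
    rw [this]
    exact h2
  · rintro s ⟨a, ha, b, hb, rfl, _⟩
    refine ⟨a, ha, ?_⟩
    have : (a ∩ b) \ a = ∅ := by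
      ext x; simp only [Set.mem_diff, Set.mem_inter_iff, Set.mem_empty_iff_false]; tauto
    rw [AlmostSubset, this]
    exact Set.finite_empty
  · rintro s ⟨a, ha, b, hb, rfl, _⟩
    refine ⟨b, hb, ?_⟩
    have : (a ∩ b) \ b = ∅ := by
      ext x; simp only [Set.mem_diff, Set.mem_inter_iff, Set.mem_empty_iff_false]; tauto
    rw [AlmostSubset, this]
    exact Set.finite_empty

/-- Any finite family of mad families has a common mad refinement. -/
lemma exists_refine_fin : ∀ (n : ℕ) (F : Fin n → Set (Set ℕ)), (∀ i, IsMadFamily (F i)) →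
    ∃ B, IsMadFamily B ∧ ∀ i, Refines B (F i)
  | 0, _, _ => ⟨{Set.univ}, isMadFamily_singleton_univ, fun i => i.elim0⟩
  | (n + 1), F, h => by
    obtain ⟨B, hB, hr⟩ := exists_refine_fin n (F ∘ Fin.succ) (fun i => h _)
    obtain ⟨C, hC, h1, h2⟩ := exists_refine_pair hB (h 0)
    refine ⟨C, hC, fun i => ?_⟩
    induction i using Fin.cases with
    | zero => exact h2
    | succ j => exact refines_trans h1 (hr j)

lemma even_infinite : {n : ℕ | Even n}.Infinite := by
  refine Set.infinite_of_injective_forall_mem (f := fun k : ℕ => 2 * k) ?_ ?_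
  · intro a b hab; dsimp only at hab; omega
  · intro k; exact ⟨k, by omega⟩

lemma odd_infinite : {n : ℕ | ¬ Even n}.Infinite := by
  refine Set.infinite_of_injective_forall_mem (f := fun k : ℕ => 2 * k + 1) ?_ ?_
  · intro a b hab; dsimp only at hab; omega
  · intro k; rintro ⟨r, hr⟩; omega

/-- Every infinite set of naturals can be split by a set that is infinite and co-infinite. -/
lemma exists_split {a : Set ℕ} (ha : a.Infinite) :
    ∃ X : Set ℕ, X.Infinite ∧ Xᶜ.Infinite ∧ (a ∩ X).Infinite ∧ (a ∩ Xᶜ).Infinite := by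
  set f : ℕ ↪ a := Set.Infinite.natEmbedding a ha with hf
  set g : ℕ → ℕ := fun n => (f n : ℕ) with hg
  have hginj : Function.Injective g := by
    intro m n hmn
    exact f.injective (Subtype.ext hmn)
  have hgmem : ∀ n, g n ∈ a := fun n => (f n).2
  refine ⟨g '' {n | Even n}, ?_, ?_, ?_, ?_⟩
  · exact Set.Infinite.image hginj.injOn even_infinite
  · apply Set.Infinite.mono (s := g '' {n | ¬ Even n})
    · intro x hx
      obtain ⟨n, hn, rfl⟩ := hx
      intro hmem
      obtain ⟨m, hm, hgm⟩ := hmem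
      exact hn (hginj hgm ▸ hm)
    · exact Set.Infinite.image hginj.injOn odd_infinite
  · apply Set.Infinite.mono (s := g '' {n | Even n})
    · intro x hx
      obtain ⟨n, _, rfl⟩ := hx
      exact ⟨hgmem n, ⟨n, ‹_›, rfl⟩⟩
    · exact Set.Infinite.image hginj.injOn even_infinite
  · apply Set.Infinite.mono (s := g '' {n | ¬ Even n})
    · intro x hx
      obtain ⟨n, hn, rfl⟩ := hx
      refine ⟨hgmem n, ?_⟩
      intro hmem
      obtain ⟨m, hm, hgm⟩ := hmem
      exact hn (hginj hgm ▸ hm)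
    · exact Set.Infinite.image hginj.injOn odd_infinite

/-- The family of all two-element partitions of ℕ into infinite pieces has no
common mad refinement; hence `distSet` is nonempty. -/
lemma distSet_nonempty : distSet.Nonempty := by
  refine ⟨_, ⟨{X : Set ℕ // X.Infinite ∧ Xᶜ.Infinite},
    fun X => {X.1, X.1ᶜ}, rfl, ?_, ?_⟩⟩
  · rintro ⟨X, hX1, hX2⟩
    refine ⟨?_, ?_, ?_⟩
    · rintro a (rfl | rfl)
      · exact hX1
      · exact hX2
    · rintro x (rfl | rfl) y (rfl | rfl) hne
      · exact absurd rfl hne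
      · rw [Set.inter_compl_self]; exact Set.finite_empty
      · rw [Set.compl_inter_self]; exact Set.finite_empty
      · exact absurd rfl hne
    · intro b hb
      by_cases h : (b ∩ X).Infinite
      · exact ⟨X, Or.inl rfl, h⟩
      · refine ⟨Xᶜ, Or.inr rfl, ?_⟩
        rw [Set.not_infinite] at h
        intro hfin
        apply hb
        have : b ⊆ (b ∩ X) ∪ (b ∩ Xᶜ) := by
          intro x hx
          by_cases hxX : x ∈ X
          · exact Or.inl ⟨hx, hxX⟩
          · exact Or.inr ⟨hx, hxX⟩
        exact (h.union hfin).subset this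
  · rintro ⟨B, hB, hr⟩
    obtain ⟨a, haB, -⟩ := hB.2.2 Set.univ Set.infinite_univ
    have hainf : a.Infinite := hB.1 a haB
    obtain ⟨X, hX1, hX2, hXa1, hXa2⟩ := exists_split hainf
    obtain ⟨t, ht, hsub⟩ := hr ⟨X, hX1, hX2⟩ a haB
    rcases ht with rfl | rfl
    · -- a ⊆* X, but a ∩ Xᶜ ⊆ a \ X is infinite
      apply hXa2
      refine hsub.subset ?_
      intro x hx
      exact ⟨hx.1, hx.2⟩
    · -- a ⊆* Xᶜ, but a \ Xᶜ = a ∩ X is infinite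
      apply hXa1
      refine hsub.subset ?_
      intro x hx
      exact ⟨hx.1, fun h => h hx.2⟩

lemma aleph0_le_distributivityNumber : Cardinal.aleph0 ≤ distributivityNumber := by
  rw [distributivityNumber_eq]
  refine le_csInf distSet_nonempty ?_
  rintro κ ⟨ι, F, rfl, hmad, hno⟩
  by_contra hlt
  push_neg at hlt
  have hfin : Finite ι := Cardinal.mk_lt_aleph0_iff.1 hlt
  obtain ⟨n, ⟨e⟩⟩ := Finite.exists_equiv_fin ι
  obtain ⟨B, hB, hrB⟩ := exists_refine_fin n (F ∘ e.symm) (fun i => hmad _)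
  refine hno ⟨B, hB, fun i => ?_⟩
  have := hrB (e i)
  simpa using this

/-- Any family of fewer than `𝔥` many mad families has a common mad refinement. -/
lemma exists_refine_of_lt {ι : Type} (F : ι → Set (Set ℕ)) (hmad : ∀ i, IsMadFamily (F i))
    (h : Cardinal.mk ι < distributivityNumber) :
    ∃ B, IsMadFamily B ∧ ∀ i, Refines B (F i) := by
  by_contra hno
  have : distributivityNumber ≤ Cardinal.mk ι := by
    rw [distributivityNumber_eq]
    exact csInf_le' ⟨ι, F, rfl, hmad, hno⟩
  exact absurd this (not_le_of_gt h)

/-- The matrix: at stage `ξ`, choose (if possible) a common mad refinement of all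
earlier stages together with the `ξ`-th family of the witness sequence `W`. -/
noncomputable def matFun (W : Ordinal → Set (Set ℕ)) : Ordinal → Set (Set ℕ) :=
  WellFounded.fix Ordinal.lt_wf fun ξ rec =>
    Classical.epsilon fun B => IsMadFamily B ∧ Refines B (W ξ) ∧
      ∀ η (h : η < ξ), Refines B (rec η h)

lemma matFun_eq (W : Ordinal → Set (Set ℕ)) (ξ : Ordinal) :
    matFun W ξ = Classical.epsilon (fun B => IsMadFamily B ∧ Refines B (W ξ) ∧
      ∀ η < ξ, Refines B (matFun W η)) := by
  unfold matFun
  exact WellFounded.fix_eq _ _ _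

lemma matFun_spec (W : Ordinal → Set (Set ℕ)) (hW : ∀ ξ, IsMadFamily (W ξ)) :
    ∀ ξ, ξ < distributivityNumber.ord →
      IsMadFamily (matFun W ξ) ∧ Refines (matFun W ξ) (W ξ) ∧
        ∀ η < ξ, Refines (matFun W ξ) (matFun W η) := by
  intro ξ
  induction ξ using Ordinal.induction with
  | h ξ IH =>
    intro hξ
    have hex : ∃ B, IsMadFamily B ∧ Refines B (W ξ) ∧ ∀ η < ξ, Refines B (matFun W η) := by
      set F : Option ξ.ToType → Set (Set ℕ) :=
        fun i => i.elim (W ξ) (fun i => matFun W ((Ordinal.ToType.mk (o := ξ)).symm i).1) with hF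
      have hmad : ∀ i, IsMadFamily (F i) := by
        rintro (_ | i)
        · exact hW ξ
        · have hlt : (((Ordinal.ToType.mk (o := ξ)).symm i : Set.Iio ξ) : Ordinal) < ξ :=
            ((Ordinal.ToType.mk (o := ξ)).symm i).2
          exact (IH _ hlt (hlt.trans hξ)).1
      have hcard : Cardinal.mk (Option ξ.ToType) < distributivityNumber := by
        rw [Cardinal.mk_option, Cardinal.mk_toType]
        exact Cardinal.add_lt_of_lt aleph0_le_distributivityNumber
          (Cardinal.lt_ord.1 hξ)
          (Cardinal.one_lt_aleph0.trans_le aleph0_le_distributivityNumber)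
      obtain ⟨B, hB, hrB⟩ := exists_refine_of_lt F hmad hcard
      refine ⟨B, hB, hrB none, ?_⟩
      intro η hη
      have := hrB (some ((Ordinal.ToType.mk (o := ξ)) ⟨η, hη⟩))
      simpa [hF] using this
    have h2 := Classical.epsilon_spec hex
    rw [matFun_eq]
    exact h2

/-- There is a distributivity matrix of height `𝔥`, and every distributivity
matrix of height `lam` satisfies `|lam| ≥ 𝔥`; hence `𝔥` is the minimal height
of a distributivity matrix. -/
theorem distributivityNumber_minimal_matrix_height :
    (∃ A : Ordinal → Set (Set ℕ), IsDistribMatrix distributivityNumber.ord A) ∧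
    (∀ (lam : Ordinal) (A : Ordinal → Set (Set ℕ)),
      IsDistribMatrix lam A → distributivityNumber ≤ lam.card) := by
  constructor
  · -- existence of a distributivity matrix of height 𝔥
    have hmem : distributivityNumber ∈ distSet := by
      rw [distributivityNumber_eq]
      exact csInf_mem distSet_nonempty
    obtain ⟨ι₀, W', hcard, hmadW, hnoW⟩ := hmem
    -- transfer the witness family to an Ordinal-indexed family
    have hmk : Cardinal.mk ι₀ = Cardinal.mk distributivityNumber.ord.ToType := by
      rw [Cardinal.mk_toType, Cardinal.card_ord, hcard]
    obtain ⟨e⟩ : Nonempty (ι₀ ≃ distributivityNumber.ord.ToType) := Cardinal.eq.1 hmk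
    set W : Ordinal → Set (Set ℕ) := fun ξ =>
      if h : ξ < distributivityNumber.ord then
        W' (e.symm ((Ordinal.ToType.mk (o := distributivityNumber.ord)) ⟨ξ, h⟩))
      else {Set.univ} with hWdef
    have hW : ∀ ξ, IsMadFamily (W ξ) := by
      intro ξ
      simp only [hWdef]
      split
      · exact hmadW _
      · exact isMadFamily_singleton_univ
    have spec := matFun_spec W hW
    refine ⟨matFun W, ?_, ?_, ?_⟩
    · intro ξ hξ
      exact (spec ξ hξ).1
    · intro ξ η hle hη
      rcases eq_or_lt_of_le hle with rfl | hlt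
      · exact refines_refl _
      · exact (spec η hη).2.2 ξ hlt
    · rintro ⟨B, hB, hr⟩
      refine hnoW ⟨B, hB, fun i => ?_⟩
      set t := (Ordinal.ToType.mk (o := distributivityNumber.ord)).symm (e i) with ht
      have htlt : (t : Ordinal) < distributivityNumber.ord := t.2
      have h1 : Refines B (matFun W t.1) := hr t.1 htlt
      have h2 : Refines (matFun W t.1) (W t.1) := (spec t.1 htlt).2.1
      have h3 : W t.1 = W' i := by
        simp only [hWdef]
        rw [dif_pos htlt]
        have : (⟨t.1, htlt⟩ : Set.Iio distributivityNumber.ord) = t := rfl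
        rw [this, ht, OrderIso.apply_symm_apply, Equiv.symm_apply_apply]
      rw [← h3]
      exact refines_trans h1 h2
  · -- lower bound on the height of any distributivity matrix
    intro lam A hA
    obtain ⟨h1, h2, h3⟩ := hA
    rw [distributivityNumber_eq, ← Cardinal.mk_toType]
    refine csInf_le' ⟨lam.ToType, fun i => A ((Ordinal.ToType.mk (o := lam)).symm i).1, rfl, ?_, ?_⟩
    · intro i
      exact h1 _ ((Ordinal.ToType.mk (o := lam)).symm i).2
    · rintro ⟨B, hB, hr⟩
      refine h3 ⟨B, hB, fun ξ hξ => ?_⟩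
      have := hr ((Ordinal.ToType.mk (o := lam)) ⟨ξ, hξ⟩)
      simpa using this
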